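/- arXiv:1302.7011 — 5 statements merged into one kernel-verified Lean document; each statement's English description precedes it below -/
import Mathlib

section
/- Let b_1, ..., b_k and c be integers, and let P_i, Q_i be the forward convergent numerators and denominators of [b_1, ..., b_k]^-. Then (whenever all intermediate denominators are nonzero) the palindromic continued fraction satisfies [b_1, ..., b_k, c, -b_k, ..., -b_1]^- = c P_k^2 / (c P_k Q_k + 1). -/
/-- Negative continued fraction: `[a]⁻ = a`, `[a₁,…,aₖ]⁻ = a₁ - 1/[a₂,…,aₖ]⁻`. -/
def negCF : List ℚ → ℚ
  | [] => 0
  | [x] => x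
  | x :: y :: l => x - (negCF (y :: l))⁻¹

/-- Forward convergent numerators, shifted so that `Pseq b (i+1) = P_i`:
`P_{-1}=0`, `P_0=1`, `P_i = b_i P_{i-1} - P_{i-2}`. -/
def Pseq (b : ℕ → ℤ) : ℕ → ℤ
  | 0 => 0
  | 1 => 1
  | (n+2) => b (n+1) * Pseq b (n+1) - Pseq b n

/-- Forward convergent denominators, shifted so that `Qseq b (i+1) = Q_i`:
`Q_{-1}=-1`, `Q_0=0`, `Q_i = b_i Q_{i-1} - Q_{i-2}`. -/
def Qseq (b : ℕ → ℤ) : ℕ → ℤ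
  | 0 => -1
  | 1 => 0
  | (n+2) => b (n+1) * Qseq b (n+1) - Qseq b n

/-- The palindromic list `[b₁, …, b_k, c, -b_k, …, -b₁]` as rationals. -/
def palList (b : ℕ → ℤ) (k : ℕ) (c : ℤ) : List ℚ :=
  (List.range k).map (fun t => (b (t+1) : ℚ)) ++ [(c : ℚ)] ++
    (List.range k).map (fun t => (-(b (k - t)) : ℚ))

lemma negCF_cons (x : ℚ) (l : List ℚ) (h : l ≠ []) :
    negCF (x :: l) = x - (negCF l)⁻¹ := by
  cases l with
  | nil => exact absurd rfl h
  | cons y t => rfl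

lemma my_div_div_same (a c y : ℚ) (hy : y ≠ 0) : (a/y)/(c/y) = a/c := by
  by_cases hc : c = 0
  · simp [hc]
  · field_simp

lemma det_PQ (b : ℕ → ℤ) (k : ℕ) :
    Pseq b k * Qseq b (k+1) - Pseq b (k+1) * Qseq b k = 1 := by
  induction k with
  | zero => simp [Pseq, Qseq]
  | succ k ih =>
    show Pseq b (k+1) * Qseq b (k+2) - Pseq b (k+2) * Qseq b (k+1) = 1
    simp only [Pseq, Qseq]
    linear_combination ih

lemma front (b : ℕ → ℤ) : ∀ (m : ℕ) (rest : List ℚ), rest ≠ [] →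
    (∀ j, 1 ≤ j → j ≤ m →
      negCF (((List.range (m-j)).map fun t => (b (j+t+1) : ℚ)) ++ rest) ≠ 0) →
    negCF (((List.range m).map fun t => (b (t+1) : ℚ)) ++ rest) =
      ((Pseq b (m+1) : ℚ) * negCF rest - (Pseq b m : ℚ)) /
      ((Qseq b (m+1) : ℚ) * negCF rest - (Qseq b m : ℚ)) := by
  intro m
  induction m with
  | zero => intro rest h1 h2; simp [Pseq, Qseq]
  | succ m ih =>
    intro rest hne h
    have hy : negCF rest ≠ 0 := by
      have := h (m+1) (by omega) (by omega)
      simpa using this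
    have key : ((List.range (m+1)).map fun t => (b (t+1):ℚ)) ++ rest
        = ((List.range m).map fun t => (b (t+1):ℚ)) ++ ((b (m+1):ℚ) :: rest) := by
      rw [List.range_succ]; simp
    rw [key, ih ((b (m+1):ℚ) :: rest) (by simp) ?_]
    · rw [negCF_cons _ _ hne]
      have e1 : ((Pseq b (m+1):ℚ)) * ((b (m+1):ℚ) - (negCF rest)⁻¹) - (Pseq b m:ℚ)
          = ((Pseq b (m+2):ℚ) * negCF rest - (Pseq b (m+1):ℚ)) / negCF rest := by
        simp only [Pseq]
        push_cast
        field_simp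
        ring
      have e2 : ((Qseq b (m+1):ℚ)) * ((b (m+1):ℚ) - (negCF rest)⁻¹) - (Qseq b m:ℚ)
          = ((Qseq b (m+2):ℚ) * negCF rest - (Qseq b (m+1):ℚ)) / negCF rest := by
        simp only [Qseq]
        push_cast
        field_simp
        ring
      rw [e1, e2, my_div_div_same _ _ _ hy]
    · intro j hj1 hj2
      have h' := h j hj1 (by omega)
      have hlist : ((List.range (m+1-j)).map fun t => (b (j+t+1):ℚ)) ++ rest
          = ((List.range (m-j)).map fun t => (b (j+t+1):ℚ)) ++ ((b (m+1):ℚ) :: rest) := by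
        have : m+1-j = (m-j)+1 := by omega
        rw [this, List.range_succ]
        have : j + (m-j) + 1 = m+1 := by omega
        simp [this]
      rw [hlist] at h'
      exact h'

lemma revcons (b : ℕ → ℤ) (j : ℕ) :
    ((List.range (j+1)).map fun t => (-(b (j+1-t)) : ℚ))
      = (-(b (j+1)) : ℚ) :: ((List.range j).map fun t => (-(b (j-t)) : ℚ)) := by
  rw [List.range_succ_eq_map]
  simp [List.map_map, Function.comp_def, Nat.succ_sub_succ]

lemma revCF (b : ℕ → ℤ) : ∀ (j : ℕ), 1 ≤ j →
    (∀ i, 1 ≤ i → i ≤ j → negCF ((List.range i).map fun t => (-(b (i-t)) : ℚ)) ≠ 0) →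
    negCF ((List.range j).map fun t => (-(b (j-t)) : ℚ))
        = -((Pseq b (j+1) : ℚ) / (Pseq b j : ℚ))
      ∧ (Pseq b (j+1):ℚ) ≠ 0 ∧ (Pseq b j:ℚ) ≠ 0 := by
  intro j
  induction j with
  | zero => omega
  | succ j ih =>
    intro _ h
    rcases Nat.eq_zero_or_pos j with hj | hj
    · subst hj
      have hS := h 1 le_rfl le_rfl
      have hval : negCF ((List.range 1).map fun t => (-(b (1-t)) : ℚ)) = (-(b 1) : ℚ) := by
        simp [negCF]
      rw [hval] at hS ⊢
      have hb : (b 1 : ℚ) ≠ 0 := by simpa using hS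
      refine ⟨?_, ?_, ?_⟩
      · simp [Pseq]
      · simpa [Pseq] using hb
      · simp [Pseq]
    · obtain ⟨hSj, hP1, hP0⟩ := ih hj (fun i hi1 hi2 => h i hi1 (by omega))
      have hS := h (j+1) (by omega) le_rfl
      have hcons := revcons b j
      have hne : ((List.range j).map fun t => (-(b (j-t)) : ℚ)) ≠ [] := by
        simp [List.range_eq_nil]; omega
      have hval : negCF ((List.range (j+1)).map fun t => (-(b (j+1-t)) : ℚ))
          = -((Pseq b (j+2) : ℚ) / (Pseq b (j+1) : ℚ)) := by
        rw [hcons, negCF_cons _ _ hne, hSj]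
        rw [inv_neg, inv_div]
        simp only [Pseq]
        push_cast
        field_simp
        ring
      rw [hval] at hS ⊢
      refine ⟨rfl, ?_, hP1⟩
      intro h0
      rw [h0] at hS
      simp at hS

lemma range_split (j k : ℕ) (h : j ≤ k) :
    List.range k = List.range j ++ (List.range (k-j)).map (j+·) := by
  rw [← List.range_add]; congr 1; omega

lemma drop_map_range {f : ℕ → ℚ} (j k : ℕ) (hjk : j ≤ k) :
    ((List.range k).map f).drop j = (List.range (k-j)).map fun t => f (j+t) := by
  conv_lhs => rw [range_split j k hjk]
  rw [List.map_append, List.drop_left' (by simp), List.map_map]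
  rfl

lemma drop1 (b : ℕ → ℤ) (c : ℤ) (k j : ℕ) (hjk : j ≤ k) :
    (palList b k c).drop j =
      ((List.range (k-j)).map fun t => (b (j+t+1):ℚ)) ++
        ((c:ℚ) :: ((List.range k).map fun t => (-(b (k-t)):ℚ))) := by
  rw [palList, List.append_assoc, List.singleton_append]
  rw [List.drop_append_of_le_length (by simpa using hjk), drop_map_range j k hjk]

lemma drop2 (b : ℕ → ℤ) (c : ℤ) (k i : ℕ) (hik : i ≤ k) :
    (palList b k c).drop (k+1+(k-i)) =
      (List.range i).map fun t => (-(b (i-t)):ℚ) := by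
  rw [palList]
  have h1 : ((List.range k).map (fun t => (b (t+1) : ℚ)) ++ [(c : ℚ)]).length = k+1 := by
    simp
  rw [show k+1+(k-i) = ((List.range k).map (fun t => (b (t+1) : ℚ)) ++ [(c : ℚ)]).length + (k-i) from by rw [h1]]
  rw [List.drop_length_add_append, drop_map_range (k-i) k (by omega),
    show k - (k-i) = i from by omega]
  apply List.map_congr_left
  intro t _
  have h : k - (k-i+t) = i - t := by omega
  simp [h]

theorem stmt_3 (b : ℕ → ℤ) (c : ℤ) (k : ℕ)
    (hden : ∀ j, 1 ≤ j → j < (palList b k c).length →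
      negCF ((palList b k c).drop j) ≠ 0) :
    negCF (palList b k c) =
      ((c : ℚ) * (Pseq b (k+1) : ℚ)^2) /
        ((c : ℚ) * (Pseq b (k+1) : ℚ) * (Qseq b (k+1) : ℚ) + 1) := by
  rcases Nat.eq_zero_or_pos k with hk | hk
  · subst hk
    simp [palList, negCF, Pseq, Qseq]
  · have hlen : (palList b k c).length = 2*k+1 := by
      simp [palList]; omega
    have hrev : ∀ i, 1 ≤ i → i ≤ k →
        negCF ((List.range i).map fun t => (-(b (i-t)) : ℚ)) ≠ 0 := by
      intro i hi1 hi2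
      have := hden (k+1+(k-i)) (by omega) (by rw [hlen]; omega)
      rwa [drop2 b c k i hi2] at this
    obtain ⟨hS, hP1, hP0⟩ := revCF b k hk hrev
    set rest : List ℚ := (c:ℚ) :: ((List.range k).map fun t => (-(b (k-t)):ℚ)) with hrest
    have hrest_ne : rest ≠ [] := by simp [hrest]
    have hfront_h : ∀ j, 1 ≤ j → j ≤ k →
        negCF (((List.range (k-j)).map fun t => (b (j+t+1):ℚ)) ++ rest) ≠ 0 := by
      intro j h1 h2
      have := hden j h1 (by rw [hlen]; omega)
      rwa [drop1 b c k j h2] at this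
    have hpal : palList b k c = ((List.range k).map fun t => (b (t+1):ℚ)) ++ rest := by
      rw [palList, List.append_assoc, List.singleton_append]
    have hne2 : ((List.range k).map fun t => (-(b (k-t)):ℚ)) ≠ [] := by
      simp [List.range_eq_nil]; omega
    have hy : negCF rest = ((c:ℚ)*(Pseq b (k+1):ℚ) + (Pseq b k:ℚ))/(Pseq b (k+1):ℚ) := by
      rw [hrest, negCF_cons _ _ hne2, hS, inv_neg, inv_div]
      field_simp
      ring
    have hdet : (Pseq b k : ℚ) * (Qseq b (k+1):ℚ) - (Pseq b (k+1):ℚ) * (Qseq b k:ℚ) = 1 := by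
      exact_mod_cast det_PQ b k
    rw [hpal, front b k rest hrest_ne hfront_h, hy]
    have e1 : (Pseq b (k+1):ℚ) * (((c:ℚ)*(Pseq b (k+1):ℚ) + (Pseq b k:ℚ))/(Pseq b (k+1):ℚ)) - (Pseq b k:ℚ)
        = ((c:ℚ) * (Pseq b (k+1):ℚ)^2)/(Pseq b (k+1):ℚ) := by
      field_simp
      ring
    have e2 : (Qseq b (k+1):ℚ) * (((c:ℚ)*(Pseq b (k+1):ℚ) + (Pseq b k:ℚ))/(Pseq b (k+1):ℚ)) - (Qseq b k:ℚ)
        = ((c:ℚ) * (Pseq b (k+1):ℚ) * (Qseq b (k+1):ℚ) + 1)/(Pseq b (k+1):ℚ) := by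
      field_simp
      linear_combination hdet
    rw [e1, e2, my_div_div_same _ _ _ hP1]
end

section
/- Let s, t be integers, set m = 4 + 3t + 2s + 2st and d = -(3 + 2s). Then the continued fraction [-t-1, s+2, 2, t+2, 2, -s-1]^- equals m^2 / (-(3+2s)^2 (1+t)) whenever defined, d is odd, d divides m - 1 with m - 1 = -d(1+t), and setting q = d(m-1) one has q ≡ -(3+2s)^2(1+t) (mod m^2). -/
/-- With `m = 4 + 3t + 2s + 2st` and `d = -(3+2s)`:
`[-t-1, s+2, 2, t+2, 2, -s-1]⁻ = m² / (-(3+2s)²(1+t))` whenever defined,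
`d` is odd, `d ∣ m-1` with `m - 1 = -d(1+t)`, and `q = d(m-1)` satisfies
`q ≡ -(3+2s)²(1+t) (mod m²)`. -/
theorem stmt_8 (s t : ℤ)
    (hden : ∀ j, 1 ≤ j → j < 6 →
      negCF (([(-(t:ℚ) - 1), (s:ℚ) + 2, 2, (t:ℚ) + 2, 2, -(s:ℚ) - 1]).drop j) ≠ 0) :
    negCF [(-(t:ℚ) - 1), (s:ℚ) + 2, 2, (t:ℚ) + 2, 2, -(s:ℚ) - 1] =
      ((4 + 3*t + 2*s + 2*s*t : ℤ)^2 : ℚ) / ((-(3 + 2*s)^2 * (1 + t) : ℤ) : ℚ) ∧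
    Odd (-(3 + 2*s)) ∧
    (-(3 + 2*s)) ∣ ((4 + 3*t + 2*s + 2*s*t) - 1) ∧
    (4 + 3*t + 2*s + 2*s*t) - 1 = -(-(3 + 2*s)) * (1 + t) ∧
    (-(3 + 2*s)) * ((4 + 3*t + 2*s + 2*s*t) - 1) ≡
      -(3 + 2*s)^2 * (1 + t) [ZMOD (4 + 3*t + 2*s + 2*s*t)^2] := by
  have h5 := hden 5 (by norm_num) (by norm_num)
  have h3 := hden 3 (by norm_num) (by norm_num)
  have h2 := hden 2 (by norm_num) (by norm_num)
  have h1 := hden 1 (by norm_num) (by norm_num)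
  simp only [List.drop, negCF] at h5 h3 h2 h1 ⊢
  have hA : (-(s:ℚ) - 1) ≠ 0 := h5
  have hB : (-2*(s:ℚ) - 3) ≠ 0 := by
    intro h
    have h2 : ((-2*s - 3 : ℤ) : ℚ) = ((0:ℤ) : ℚ) := by push_cast; linarith
    have := Int.cast_injective (α := ℚ) h2
    omega
  have g5 : (2:ℚ) - (-(s:ℚ) - 1)⁻¹ = (-2*(s:ℚ) - 3)/(-(s:ℚ) - 1) := by
    rw [inv_eq_one_div, sub_div' hA, div_eq_div_iff hA hA]; ring
  have he3 : ((t:ℚ) + 2) - (2 - (-(s:ℚ) - 1)⁻¹)⁻¹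
      = (-2*s*t - 3*t - 3*s - 5) / (-2*(s:ℚ) - 3) := by
    rw [g5, inv_div, sub_div' hB, div_eq_div_iff hB hB]; ring
  rw [he3] at h3
  have hC : (-2*(s:ℚ)*t - 3*t - 3*s - 5) ≠ 0 := by
    intro h
    exact h3 (by rw [div_eq_zero_iff]; left; linarith)
  have he2 : (2 : ℚ) - (((t:ℚ) + 2) - (2 - (-(s:ℚ) - 1)⁻¹)⁻¹)⁻¹
      = (-4*s*t - 6*t - 4*s - 7) / (-2*(s:ℚ)*t - 3*t - 3*s - 5) := by
    rw [he3, inv_div, sub_div' hC, div_eq_div_iff hC hC]; ring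
  rw [he2] at h2
  have hD : (-4*(s:ℚ)*t - 6*t - 4*s - 7) ≠ 0 := by
    intro h
    exact h2 (by rw [div_eq_zero_iff]; left; linarith)
  have he1 : ((s:ℚ) + 2) - ((2 : ℚ) - (((t:ℚ) + 2) - (2 - (-(s:ℚ) - 1)⁻¹)⁻¹)⁻¹)⁻¹
      = (-4*s^2*t - 4*s^2 - 12*s*t - 12*s - 9*t - 9) / (-4*(s:ℚ)*t - 6*t - 4*s - 7) := by
    rw [he2, inv_div, sub_div' hD, div_eq_div_iff hD hD]; ring
  rw [he1] at h1
  have hE : (-4*(s:ℚ)^2*t - 4*s^2 - 12*s*t - 12*s - 9*t - 9) ≠ 0 := by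
    intro h
    exact h1 (by rw [div_eq_zero_iff]; left; linarith)
  have ht : (1 + (t:ℚ)) ≠ 0 := by
    intro h
    apply hE
    have htt : (t:ℚ) = -1 := by linarith
    rw [htt]; ring
  have hsn : (3 + 2*(s:ℚ)) ≠ 0 := by intro h; apply hB; linarith
  have hDen : (-(3 + 2*(s:ℚ))^2 * (1 + (t:ℚ))) ≠ 0 :=
    mul_ne_zero (neg_ne_zero.mpr (pow_ne_zero 2 hsn)) ht
  refine ⟨?_, ⟨-s - 2, by ring⟩, ⟨-(1 + t), by ring⟩, by ring, ?_⟩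
  · rw [he1, inv_div]
    push_cast
    rw [sub_div' hE, div_eq_div_iff hE hDen]
    ring
  · have heq : (-(3 + 2*s)) * ((4 + 3*t + 2*s + 2*s*t) - 1) = -(3 + 2*s)^2 * (1 + t) := by ring
    rw [heq]
end

section
/- Let s, t be integers, set m = 4 + 3s + 3t + 2st and d = -(3 + 2s), p = m^2, q = d(m-1). Then d divides 2m + 1 with 2m + 1 = -d(3 + 2t), q·m ≡ -d·m (mod p), and -(3+2t)·m·d ≡ m (mod p) (so that -(3+2t)m represents d^{-1}m modulo p). -/
/-- With `m = 4 + 3s + 3t + 2st`, `d = -(3+2s)`, `p = m²`, `q = d(m-1)`: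
`d ∣ 2m+1` with `2m+1 = -d(3+2t)`, `q·m ≡ -d·m (mod p)`, and
`-(3+2t)·m·d ≡ m (mod p)`. -/
theorem stmt_10 (s t : ℤ) :
    (-(3 + 2*s)) ∣ (2*(4 + 3*s + 3*t + 2*s*t) + 1) ∧
    2*(4 + 3*s + 3*t + 2*s*t) + 1 = -(-(3 + 2*s)) * (3 + 2*t) ∧
    (-(3 + 2*s) * ((4 + 3*s + 3*t + 2*s*t) - 1)) * (4 + 3*s + 3*t + 2*s*t) ≡
      -(-(3 + 2*s)) * (4 + 3*s + 3*t + 2*s*t) [ZMOD (4 + 3*s + 3*t + 2*s*t)^2] ∧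
    -(3 + 2*t) * (4 + 3*s + 3*t + 2*s*t) * (-(3 + 2*s)) ≡
      (4 + 3*s + 3*t + 2*s*t) [ZMOD (4 + 3*s + 3*t + 2*s*t)^2] := by
  refine ⟨⟨-(3+2*t), by ring⟩, by ring, ?_, ?_⟩
  · exact Int.modEq_iff_dvd.mpr ⟨3+2*s, by ring⟩
  · exact Int.modEq_iff_dvd.mpr ⟨-2, by ring⟩
end

section
/- Let n be an integer with n ∉ {-1, 0}, p = (4n-1)^2 and q = 8n^2 - 1. Then q^2 is not congruent to 1 and not congruent to -1 modulo p. -/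
/-- For `n ∉ {-1, 0}`, `p = (4n-1)²`, `q = 8n²-1`: `q² ≢ 1` and `q² ≢ -1 (mod p)`. -/
theorem stmt_12 (n : ℤ) (h1 : n ≠ -1) (h0 : n ≠ 0) :
    ¬ ((8*n^2 - 1)^2 ≡ 1 [ZMOD (4*n - 1)^2]) ∧
    ¬ ((8*n^2 - 1)^2 ≡ -1 [ZMOD (4*n - 1)^2]) := by
  constructor
  · intro h
    have hd : (4*n - 1)^2 ∣ (8*n^2 - 1)^2 - 1 := h.symm.dvd
    have c1 : IsCoprime (4*n - 1) (2*n) := ⟨-1, 2, by ring⟩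
    have c2 : IsCoprime (4*n - 1) (2*n - 1) := ⟨1, -2, by ring⟩
    have c3 : IsCoprime (4*n - 1) (4 : ℤ) := ⟨-1, n, by ring⟩
    have c : IsCoprime ((4*n - 1)^2) ((2*n)^2 * (2*n - 1) * 4) :=
      (((c1.pow_right).mul_right c2).mul_right c3).pow_left
    have hd2 : (4*n - 1)^2 ∣ ((2*n)^2 * (2*n - 1) * 4) * (2*n + 1) := by
      have : ((2*n)^2 * (2*n - 1) * 4) * (2*n + 1) = (8*n^2 - 1)^2 - 1 := by ring
      rw [this]; exact hd
    have hdvd : (4*n - 1)^2 ∣ (2*n + 1) := c.dvd_of_dvd_mul_left hd2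
    have hle : (4*n - 1)^2 ≤ |2*n + 1| :=
      Int.le_of_dvd (abs_pos.mpr (by omega)) ((dvd_abs _ _).mpr hdvd)
    have hn : 1 ≤ n ∨ n ≤ -1 := by omega
    rcases abs_cases (2*n + 1) with ⟨ha, _⟩ | ⟨ha, _⟩ <;> rw [ha] at hle <;>
      rcases hn with hn | hn <;> nlinarith
  · intro h
    have hd : (4*n - 1)^2 ∣ (8*n^2 - 1)^2 + 1 := by
      have := h.dvd
      have e : -1 - (8*n^2 - 1)^2 = -((8*n^2 - 1)^2 + 1) := by ring
      rw [e] at this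
      exact (dvd_neg).mp this
    have hd1 : (4*n - 1) ∣ (8*n^2 - 1)^2 + 1 := dvd_trans ⟨4*n - 1, by ring⟩ hd
    have hd5 : (4*n - 1) ∣ 5 := by
      have h4 : (4*n - 1) ∣ 4*((8*n^2 - 1)^2 + 1) - (4*n-1)*(64*n^3+16*n^2-12*n-3) :=
        dvd_sub (Dvd.dvd.mul_left hd1 4) (Dvd.dvd.mul_right dvd_rfl _)
      have e : 4*((8*n^2 - 1)^2 + 1) - (4*n-1)*(64*n^3+16*n^2-12*n-3) = 5 := by ring
      rwa [e] at h4
    have h5a : (4*n - 1) ≤ 5 := Int.le_of_dvd (by norm_num) hd5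
    have h5b : -(4*n - 1) ≤ 5 := Int.le_of_dvd (by norm_num) ((neg_dvd).mpr hd5)
    have hn : n = 1 := by omega
    rw [hn] at hd5
    norm_num at hd5
end

section
/- Let s, t be nonnegative integers and consider the continued fraction [2,...,2 (t times), 3, 2+s, 2+t, 3, 2,...,2 (s times)]^- = p/q. Then the intersection lattice (Z^{t+s+4}, Q) given by the associated negative-definite plumbing (diagonal entries -a_i, consecutive off-diagonal entries 1) embeds isometrically into the standard negative diagonal lattice Z^{t+s+4}: explicitly, the assignment of vectors v_i to signed sums of standard basis vectors given by Lisca's table for type (2) satisfies v_i·v_i = -a_i, v_i·v_{i+1} = 1, and v_i·v_j = 0 for |i-j| > 1. -/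
/-- The coefficient string `(2^{[t]}, 3, 2+s, 2+t, 3, 2^{[s]})`, 0-indexed. -/
def typeTwoCoeff (t s : ℕ) (i : ℕ) : ℤ :=
  if i < t then 2
  else if i = t then 3
  else if i = t + 1 then 2 + (s : ℤ)
  else if i = t + 2 then 2 + (t : ℤ)
  else if i = t + 3 then 3
  else 2

/-- Point indicator. -/
def dd (a k : ℕ) : ℤ := if k = a then 1 else 0

/-- Interval indicator on `[p, q)`. -/
def ch (p q k : ℕ) : ℤ := if p ≤ k ∧ k < q then 1 else 0

/-- Index of the "connector" coordinate. -/
def sig (i : ℕ) : ℕ := if i ≤ 1 then 0 else i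

/-- Sign of the connector. -/
def eps (i : ℕ) : ℤ := if i = 0 then 1 else -1

/-- Lisca's type (2) embedding vectors. -/
def V (t s i k : ℕ) : ℤ :=
  if i < t then eps i * dd (sig i) k + dd (i+1) k
  else if i = t then eps t * dd (sig t) k + dd (t+1) k + dd (t+2) k
  else if i = t+1 then -dd (sig (t+1)) k + ch (t+3) (t+s+4) k
  else if i = t+2 then dd 0 k - dd 1 k + ch 2 (t+2) k
  else if i = t+3 then -dd (sig (t+1)) k + dd (t+2) k - dd (t+3) k
  else dd (i-1) k - dd i k

lemma sig_le (i : ℕ) : sig i ≤ i := by unfold sig; split <;> omega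

lemma V_lt {t s i : ℕ} (k : ℕ) (h : i < t) :
    V t s i k = eps i * dd (sig i) k + dd (i+1) k := by
  rw [V, if_pos h]

lemma V_t (t s k : ℕ) :
    V t s t k = eps t * dd (sig t) k + dd (t+1) k + dd (t+2) k := by
  rw [V, if_neg (lt_irrefl t), if_pos rfl]

lemma V_t1 (t s k : ℕ) :
    V t s (t+1) k = -dd (sig (t+1)) k + ch (t+3) (t+s+4) k := by
  rw [V, if_neg (by omega), if_neg (by omega), if_pos rfl]

lemma V_t2 (t s k : ℕ) :
    V t s (t+2) k = dd 0 k - dd 1 k + ch 2 (t+2) k := by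
  rw [V, if_neg (by omega), if_neg (by omega), if_neg (by omega), if_pos rfl]

lemma V_t3 (t s k : ℕ) :
    V t s (t+3) k = -dd (sig (t+1)) k + dd (t+2) k - dd (t+3) k := by
  rw [V, if_neg (by omega), if_neg (by omega), if_neg (by omega), if_neg (by omega),
    if_pos rfl]

lemma V_ge {t s i : ℕ} (k : ℕ) (h : t+4 ≤ i) :
    V t s i k = dd (i-1) k - dd i k := by
  rw [V, if_neg (by omega), if_neg (by omega), if_neg (by omega), if_neg (by omega),
    if_neg (by omega)]

lemma sum_dd (n a : ℕ) (h : a < n) : ∑ k ∈ Finset.range n, dd a k = 1 := by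
  simp [dd, Finset.sum_ite_eq', h]

lemma sum_ch (n p q : ℕ) (hq : q ≤ n) (hpq : p ≤ q) :
    ∑ k ∈ Finset.range n, ch p q k = (q : ℤ) - p := by
  have h1 : ∀ k, ch p q k = if k ∈ Finset.Ico p q then (1:ℤ) else 0 := by
    intro k; simp [ch, Finset.mem_Ico]
  simp only [h1]
  rw [Finset.sum_ite_mem]
  have h2 : Finset.range n ∩ Finset.Ico p q = Finset.Ico p q := by
    apply Finset.inter_eq_right.mpr
    intro x hx
    simp only [Finset.mem_Ico] at hx
    simp only [Finset.mem_range]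
    omega
  rw [h2, Finset.sum_const, Nat.card_Ico, nsmul_eq_mul, mul_one]
  push_cast [hpq]
  ring

lemma sum_nf (n a b p q : ℕ) (c1 c2 c3 : ℤ) (ha : a < n) (hb : b < n) (hq : q ≤ n)
    (hpq : p ≤ q) :
    ∑ k ∈ Finset.range n, (c1 * dd a k + c2 * dd b k + c3 * ch p q k)
      = c1 + c2 + c3 * ((q : ℤ) - p) := by
  rw [Finset.sum_add_distrib, Finset.sum_add_distrib, ← Finset.mul_sum, ← Finset.mul_sum,
    ← Finset.mul_sum, sum_dd n a ha, sum_dd n b hb, sum_ch n p q hq hpq]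
  ring

set_option maxHeartbeats 2000000 in
lemma gram_diag (t s i : ℕ) (hj : i < t+s+4) :
    ∑ k ∈ Finset.range (t+s+4), V t s i k * V t s i k = typeTwoCoeff t s i := by
  rcases Nat.lt_or_ge i t with h1 | h1
  · -- i < t
    have hv : typeTwoCoeff t s i = 2 := by simp [typeTwoCoeff, h1]
    have hpt : ∀ k ∈ Finset.range (t+s+4), V t s i k * V t s i k
        = 1 * dd (sig i) k + 1 * dd (i+1) k + 0 * ch 0 0 k := by
      intro k _
      rw [V_lt k h1]
      simp only [dd, ch, sig, eps]
      split_ifs <;> first | omega | simp_all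
    rw [Finset.sum_congr rfl hpt,
      sum_nf _ _ _ _ _ _ _ _ (by have := sig_le i; omega) (by omega) (by omega) (by omega),
      hv]
    ring
  · rcases Nat.lt_or_ge i (t+4) with h2 | h2
    · have : i = t ∨ i = t+1 ∨ i = t+2 ∨ i = t+3 := by omega
      rcases this with he | he | he | he <;> simp only [he]
      · -- i = t
        have hv : typeTwoCoeff t s t = 3 := by simp [typeTwoCoeff]
        have hpt : ∀ k ∈ Finset.range (t+s+4), V t s t k * V t s t k
            = 1 * dd (sig t) k + 0 * dd 0 k + 1 * ch (t+1) (t+3) k := by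
          intro k _
          rw [V_t]
          simp only [dd, ch, sig, eps]
          split_ifs <;> first | omega | simp_all
        rw [Finset.sum_congr rfl hpt,
          sum_nf _ _ _ _ _ _ _ _ (by have := sig_le t; omega) (by omega) (by omega)
            (by omega), hv]
        push_cast
        ring
      · -- i = t+1
        have hv : typeTwoCoeff t s (t+1) = 2 + s := by
          rw [typeTwoCoeff, if_neg (by omega), if_neg (by omega), if_pos rfl]
        have hpt : ∀ k ∈ Finset.range (t+s+4), V t s (t+1) k * V t s (t+1) k
            = 1 * dd (sig (t+1)) k + 0 * dd 0 k + 1 * ch (t+3) (t+s+4) k := by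
          intro k _
          rw [V_t1]
          simp only [dd, ch, sig, eps]
          split_ifs <;> first | omega | simp_all
        rw [Finset.sum_congr rfl hpt,
          sum_nf _ _ _ _ _ _ _ _ (by have := sig_le (t+1); omega) (by omega) (by omega)
            (by omega), hv]
        push_cast
        ring
      · -- i = t+2
        have hv : typeTwoCoeff t s (t+2) = 2 + t := by
          rw [typeTwoCoeff, if_neg (by omega), if_neg (by omega), if_neg (by omega),
            if_pos rfl]
        have hpt : ∀ k ∈ Finset.range (t+s+4), V t s (t+2) k * V t s (t+2) k
            = 1 * dd 0 k + 1 * dd 1 k + 1 * ch 2 (t+2) k := by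
          intro k _
          rw [V_t2]
          simp only [dd, ch]
          split_ifs <;> first | omega | simp_all
        rw [Finset.sum_congr rfl hpt,
          sum_nf _ _ _ _ _ _ _ _ (by omega) (by omega) (by omega) (by omega), hv]
        push_cast
        ring
      · -- i = t+3
        have hv : typeTwoCoeff t s (t+3) = 3 := by
          rw [typeTwoCoeff, if_neg (by omega), if_neg (by omega), if_neg (by omega),
            if_neg (by omega), if_pos rfl]
        have hpt : ∀ k ∈ Finset.range (t+s+4), V t s (t+3) k * V t s (t+3) k
            = 1 * dd (sig (t+1)) k + 0 * dd 0 k + 1 * ch (t+2) (t+4) k := by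
          intro k _
          rw [V_t3]
          simp only [dd, ch, sig]
          split_ifs <;> first | omega | simp_all
        rw [Finset.sum_congr rfl hpt,
          sum_nf _ _ _ _ _ _ _ _ (by have := sig_le (t+1); omega) (by omega) (by omega)
            (by omega), hv]
        push_cast
        ring
    · -- i ≥ t+4
      have hv : typeTwoCoeff t s i = 2 := by
        rw [typeTwoCoeff, if_neg (by omega), if_neg (by omega), if_neg (by omega),
          if_neg (by omega), if_neg (by omega)]
      have hpt : ∀ k ∈ Finset.range (t+s+4), V t s i k * V t s i k
          = 1 * dd (i-1) k + 1 * dd i k + 0 * ch 0 0 k := by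
        intro k _
        rw [V_ge k h2]
        simp only [dd, ch]
        split_ifs <;> first | omega | simp_all
      rw [Finset.sum_congr rfl hpt,
        sum_nf _ _ _ _ _ _ _ _ (by omega) (by omega) (by omega) (by omega), hv]
      ring

set_option maxHeartbeats 2000000 in
lemma gram_adj (t s i : ℕ) (hj : i+1 < t+s+4) :
    ∑ k ∈ Finset.range (t+s+4), V t s i k * V t s (i+1) k = -1 := by
  rcases Nat.lt_or_ge (i+1) t with h1 | h1
  · -- both in chain
    have hpt : ∀ k ∈ Finset.range (t+s+4), V t s i k * V t s (i+1) k
        = (-1) * dd (sig (i+1)) k + 0 * dd 0 k + 0 * ch 0 0 k := by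
      intro k _
      rw [V_lt k (by omega), V_lt k h1]
      simp only [dd, ch, sig, eps]
      split_ifs <;> first | omega | simp_all
    rw [Finset.sum_congr rfl hpt,
      sum_nf _ _ _ _ _ _ _ _ (by have := sig_le (i+1); omega) (by omega) (by omega)
        (by omega)]
    ring
  · have hca : i+1 = t ∨ i = t ∨ i = t+1 ∨ i = t+2 ∨ i = t+3 ∨ t+4 ≤ i := by omega
    rcases hca with hc | he | he | he | he | hc <;> try simp only [he]
    · -- j = t, i = t-1
      have hpt : ∀ k ∈ Finset.range (t+s+4), V t s i k * V t s (i+1) k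
          = (-1) * dd (sig t) k + 0 * dd 0 k + 0 * ch 0 0 k := by
        intro k _
        have e2 : V t s (i+1) k = eps t * dd (sig t) k + dd (t+1) k + dd (t+2) k := by
          rw [hc]; exact V_t t s k
        rw [V_lt k (by omega), e2]
        simp only [dd, ch, sig, eps]
        split_ifs <;> first | omega | simp_all
      rw [Finset.sum_congr rfl hpt,
        sum_nf _ _ _ _ _ _ _ _ (by have := sig_le t; omega) (by omega) (by omega)
          (by omega)]
      ring
    · -- i = t, j = t+1
      have hpt : ∀ k ∈ Finset.range (t+s+4), V t s t k * V t s (t+1) k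
          = (-1) * dd (sig (t+1)) k + 0 * dd 0 k + 0 * ch 0 0 k := by
        intro k hk
        simp only [Finset.mem_range] at hk
        rw [V_t, V_t1]
        simp only [dd, ch, sig, eps]
        split_ifs <;> first | omega | simp_all
      rw [Finset.sum_congr rfl hpt,
        sum_nf _ _ _ _ _ _ _ _ (by have := sig_le (t+1); omega) (by omega) (by omega)
          (by omega)]
      ring
    · -- i = t+1, j = t+2
      have hpt : ∀ k ∈ Finset.range (t+s+4), V t s (t+1) k * V t s (t+1+1) k
          = (-1) * dd (sig (t+1)) k + 0 * dd 0 k + 0 * ch 0 0 k := by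
        intro k hk
        simp only [Finset.mem_range] at hk
        rw [V_t1, show t+1+1 = t+2 from rfl, V_t2]
        simp only [dd, ch, sig, eps]
        split_ifs <;> first | omega | simp_all
      rw [Finset.sum_congr rfl hpt,
        sum_nf _ _ _ _ _ _ _ _ (by have := sig_le (t+1); omega) (by omega) (by omega)
          (by omega)]
      ring
    · -- i = t+2, j = t+3
      have hpt : ∀ k ∈ Finset.range (t+s+4), V t s (t+2) k * V t s (t+2+1) k
          = (-1) * dd (sig (t+1)) k + 0 * dd 0 k + 0 * ch 0 0 k := by
        intro k hk
        simp only [Finset.mem_range] at hk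
        rw [V_t2, show t+2+1 = t+3 from rfl, V_t3]
        simp only [dd, ch, sig, eps]
        split_ifs <;> first | omega | simp_all
      rw [Finset.sum_congr rfl hpt,
        sum_nf _ _ _ _ _ _ _ _ (by have := sig_le (t+1); omega) (by omega) (by omega)
          (by omega)]
      ring
    · -- i = t+3, j = t+4
      have hpt : ∀ k ∈ Finset.range (t+s+4), V t s (t+3) k * V t s (t+3+1) k
          = (-1) * dd (t+3) k + 0 * dd 0 k + 0 * ch 0 0 k := by
        intro k hk
        simp only [Finset.mem_range] at hk
        rw [V_t3, V_ge k (by omega)]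
        simp only [dd, ch, sig]
        split_ifs <;> first | omega | simp_all
      rw [Finset.sum_congr rfl hpt,
        sum_nf _ _ _ _ _ _ _ _ (by omega) (by omega) (by omega) (by omega)]
      ring
    · -- tail
      have hpt : ∀ k ∈ Finset.range (t+s+4), V t s i k * V t s (i+1) k
          = (-1) * dd i k + 0 * dd 0 k + 0 * ch 0 0 k := by
        intro k _
        rw [V_ge k (by omega), V_ge k (by omega)]
        simp only [dd, ch]
        split_ifs <;> first | omega | simp_all
      rw [Finset.sum_congr rfl hpt,
        sum_nf _ _ _ _ _ _ _ _ (by omega) (by omega) (by omega) (by omega)]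
      ring

set_option maxHeartbeats 2000000 in
lemma gram_orth (t s i j : ℕ) (hj : j < t+s+4) (hlt2 : i+1 < j) :
    ∑ k ∈ Finset.range (t+s+4), V t s i k * V t s j k = 0 := by
  rcases Nat.lt_or_ge i t with hi1 | hi1
  · -- i < t
    rcases Nat.lt_or_ge j t with hj1 | hj1
    · have hpt : ∀ k ∈ Finset.range (t+s+4), V t s i k * V t s j k
          = 0 * dd 0 k + 0 * dd 0 k + 0 * ch 0 0 k := by
        intro k _
        rw [V_lt k hi1, V_lt k hj1]
        simp only [dd, ch, sig, eps]
        split_ifs <;> first | omega | simp_all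
      rw [Finset.sum_congr rfl hpt,
        sum_nf _ _ _ _ _ _ _ _ (by omega) (by omega) (by omega) (by omega)]
      ring
    · have hcb : j = t ∨ j = t+1 ∨ j = t+2 ∨ j = t+3 ∨ t+4 ≤ j := by omega
      rcases hcb with he | he | he | he | hc <;> try simp only [he]
      · have hpt : ∀ k ∈ Finset.range (t+s+4), V t s i k * V t s t k
            = 0 * dd 0 k + 0 * dd 0 k + 0 * ch 0 0 k := by
          intro k _
          rw [V_lt k hi1, V_t]
          simp only [dd, ch, sig, eps]
          split_ifs <;> first | omega | simp_all
        rw [Finset.sum_congr rfl hpt,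
          sum_nf _ _ _ _ _ _ _ _ (by omega) (by omega) (by omega) (by omega)]
        ring
      · have hpt : ∀ k ∈ Finset.range (t+s+4), V t s i k * V t s (t+1) k
            = 0 * dd 0 k + 0 * dd 0 k + 0 * ch 0 0 k := by
          intro k _
          rw [V_lt k hi1, V_t1]
          simp only [dd, ch, sig, eps]
          split_ifs <;> first | omega | simp_all
        rw [Finset.sum_congr rfl hpt,
          sum_nf _ _ _ _ _ _ _ _ (by omega) (by omega) (by omega) (by omega)]
        ring
      · -- i < t, j = t+2
        have hpt : ∀ k ∈ Finset.range (t+s+4), V t s i k * V t s (t+2) k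
            = eps i * dd (sig i) k + (if i = 0 then (-1:ℤ) else 1) * dd (i+1) k
              + 0 * ch 0 0 k := by
          intro k _
          rw [V_lt k hi1, V_t2]
          simp only [dd, ch, sig, eps]
          split_ifs <;> first | omega | simp_all
        rw [Finset.sum_congr rfl hpt,
          sum_nf _ _ _ _ _ _ _ _ (by have := sig_le i; omega) (by omega) (by omega)
            (by omega)]
        simp only [eps]
        split_ifs <;> ring
      · have hpt : ∀ k ∈ Finset.range (t+s+4), V t s i k * V t s (t+3) k
            = 0 * dd 0 k + 0 * dd 0 k + 0 * ch 0 0 k := by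
          intro k _
          rw [V_lt k hi1, V_t3]
          simp only [dd, ch, sig, eps]
          split_ifs <;> first | omega | simp_all
        rw [Finset.sum_congr rfl hpt,
          sum_nf _ _ _ _ _ _ _ _ (by omega) (by omega) (by omega) (by omega)]
        ring
      · have hpt : ∀ k ∈ Finset.range (t+s+4), V t s i k * V t s j k
            = 0 * dd 0 k + 0 * dd 0 k + 0 * ch 0 0 k := by
          intro k _
          rw [V_lt k hi1, V_ge k hc]
          simp only [dd, ch, sig, eps]
          split_ifs <;> first | omega | simp_all
        rw [Finset.sum_congr rfl hpt,
          sum_nf _ _ _ _ _ _ _ _ (by omega) (by omega) (by omega) (by omega)]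
        ring
  · have hci : i = t ∨ i = t+1 ∨ i = t+2 ∨ i = t+3 ∨ t+4 ≤ i := by omega
    rcases hci with he | he | he | he | hc <;> try simp only [he]
    · -- i = t
      have hcb : j = t+2 ∨ j = t+3 ∨ t+4 ≤ j := by omega
      rcases hcb with he | he | hcj <;> try simp only [he]
      · have hpt : ∀ k ∈ Finset.range (t+s+4), V t s t k * V t s (t+2) k
            = eps t * dd (sig t) k + (if t = 0 then (-1:ℤ) else 1) * dd (t+1) k
              + 0 * ch 0 0 k := by
          intro k _
          rw [V_t, V_t2]
          simp only [dd, ch, sig, eps]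
          split_ifs <;> first | omega | simp_all
        rw [Finset.sum_congr rfl hpt,
          sum_nf _ _ _ _ _ _ _ _ (by have := sig_le t; omega) (by omega) (by omega)
            (by omega)]
        simp only [eps]
        split_ifs <;> ring
      · have hpt : ∀ k ∈ Finset.range (t+s+4), V t s t k * V t s (t+3) k
            = (-1) * dd (sig (t+1)) k + 1 * dd (t+2) k + 0 * ch 0 0 k := by
          intro k _
          rw [V_t, V_t3]
          simp only [dd, ch, sig, eps]
          split_ifs <;> first | omega | simp_all
        rw [Finset.sum_congr rfl hpt,
          sum_nf _ _ _ _ _ _ _ _ (by have := sig_le (t+1); omega) (by omega) (by omega)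
            (by omega)]
        ring
      · have hpt : ∀ k ∈ Finset.range (t+s+4), V t s t k * V t s j k
            = 0 * dd 0 k + 0 * dd 0 k + 0 * ch 0 0 k := by
          intro k _
          rw [V_t, V_ge k hcj]
          simp only [dd, ch, sig, eps]
          split_ifs <;> first | omega | simp_all
        rw [Finset.sum_congr rfl hpt,
          sum_nf _ _ _ _ _ _ _ _ (by omega) (by omega) (by omega) (by omega)]
        ring
    · -- i = t+1
      have hcb : j = t+3 ∨ t+4 ≤ j := by omega
      rcases hcb with he | hcj <;> try simp only [he]
      · have hpt : ∀ k ∈ Finset.range (t+s+4), V t s (t+1) k * V t s (t+3) k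
            = 1 * dd (sig (t+1)) k + (-1) * dd (t+3) k + 0 * ch 0 0 k := by
          intro k _
          rw [V_t1, V_t3]
          simp only [dd, ch, sig]
          split_ifs <;> first | omega | simp_all
        rw [Finset.sum_congr rfl hpt,
          sum_nf _ _ _ _ _ _ _ _ (by have := sig_le (t+1); omega) (by omega) (by omega)
            (by omega)]
        ring
      · have hpt : ∀ k ∈ Finset.range (t+s+4), V t s (t+1) k * V t s j k
            = 1 * dd (j-1) k + (-1) * dd j k + 0 * ch 0 0 k := by
          intro k _
          rw [V_t1, V_ge k hcj]
          simp only [dd, ch, sig]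
          split_ifs <;> first | omega | simp_all
        rw [Finset.sum_congr rfl hpt,
          sum_nf _ _ _ _ _ _ _ _ (by omega) (by omega) (by omega) (by omega)]
        ring
    · -- i = t+2
      have hcj : t+4 ≤ j := by omega
      have hpt : ∀ k ∈ Finset.range (t+s+4), V t s (t+2) k * V t s j k
          = 0 * dd 0 k + 0 * dd 0 k + 0 * ch 0 0 k := by
        intro k _
        rw [V_t2, V_ge k hcj]
        simp only [dd, ch]
        split_ifs <;> first | omega | simp_all
      rw [Finset.sum_congr rfl hpt,
        sum_nf _ _ _ _ _ _ _ _ (by omega) (by omega) (by omega) (by omega)]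
      ring
    · -- i = t+3
      have hcj : t+4 ≤ j := by omega
      have hpt : ∀ k ∈ Finset.range (t+s+4), V t s (t+3) k * V t s j k
          = 0 * dd 0 k + 0 * dd 0 k + 0 * ch 0 0 k := by
        intro k _
        rw [V_t3, V_ge k hcj]
        simp only [dd, ch, sig]
        split_ifs <;> first | omega | simp_all
      rw [Finset.sum_congr rfl hpt,
        sum_nf _ _ _ _ _ _ _ _ (by omega) (by omega) (by omega) (by omega)]
      ring
    · -- i ≥ t+4
      have hpt : ∀ k ∈ Finset.range (t+s+4), V t s i k * V t s j k
          = 0 * dd 0 k + 0 * dd 0 k + 0 * ch 0 0 k := by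
        intro k _
        rw [V_ge k hc, V_ge k (by omega)]
        simp only [dd, ch]
        split_ifs <;> first | omega | simp_all
      rw [Finset.sum_congr rfl hpt,
        sum_nf _ _ _ _ _ _ _ _ (by omega) (by omega) (by omega) (by omega)]
      ring

lemma gram (t s i j : ℕ) (hj : j < t+s+4) (hij : i ≤ j) :
    ∑ k ∈ Finset.range (t+s+4), V t s i k * V t s j k =
      if i = j then typeTwoCoeff t s i else if i+1 = j then -1 else 0 := by
  rcases eq_or_lt_of_le hij with rfl | hlt
  · rw [if_pos rfl]; exact gram_diag t s i hj
  · rw [if_neg (by omega)]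
    rcases eq_or_lt_of_le (show i+1 ≤ j from hlt) with hadj | hlt2
    · rw [if_pos hadj]; subst hadj; exact gram_adj t s i hj
    · rw [if_neg (by omega)]; exact gram_orth t s i j hj hlt2

lemma V_mem (t s i k : ℕ) : V t s i k = -1 ∨ V t s i k = 0 ∨ V t s i k = 1 := by
  rcases Nat.lt_or_ge i t with h | h
  · rw [V_lt k h]; unfold dd sig eps; split_ifs <;> omega
  rcases Nat.lt_or_ge i (t+4) with h2 | h2
  · have : i = t ∨ i = t+1 ∨ i = t+2 ∨ i = t+3 := by omega
    rcases this with he | he | he | he <;> simp only [he]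
    · rw [V_t]; unfold dd sig eps; split_ifs <;> omega
    · rw [V_t1]; unfold dd ch sig; split_ifs <;> omega
    · rw [V_t2]; unfold dd ch; split_ifs <;> omega
    · rw [V_t3]; unfold dd sig; split_ifs <;> omega
  · rw [V_ge k h2]; unfold dd; split_ifs <;> omega

set_option maxHeartbeats 1000000 in
/-- The intersection lattice of the negative-definite plumbing with string
`(-2^{[t]}, -3, -2-s, -2-t, -3, -2^{[s]})` embeds isometrically into the standard
negative diagonal lattice of rank `t+s+4`: there are vectors `v i` with entries in
`{-1,0,1}` such that `v i · v i = -a_i`, `v i · v j = 1` for `|i-j| = 1`, and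
`v i · v j = 0` for `|i-j| > 1`, where `x · y = -∑ x_k y_k`. -/
theorem stmt_15 (t s : ℕ) :
    ∃ v : Fin (t+s+4) → Fin (t+s+4) → ℤ,
      (∀ i k, v i k = -1 ∨ v i k = 0 ∨ v i k = 1) ∧
      (∀ i : Fin (t+s+4), -(∑ k, v i k * v i k) = -(typeTwoCoeff t s (i : ℕ))) ∧
      (∀ i j : Fin (t+s+4), (i : ℕ) + 1 = (j : ℕ) → -(∑ k, v i k * v j k) = 1) ∧
      (∀ i j : Fin (t+s+4), (i : ℕ) + 1 < (j : ℕ) → -(∑ k, v i k * v j k) = 0) := by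
  refine ⟨fun i k => V t s i k, ?_, ?_, ?_, ?_⟩
  · intro i k
    exact V_mem t s i k
  · intro i
    rw [Fin.sum_univ_eq_sum_range (fun k => V t s i k * V t s i k)]
    have := gram t s i i i.isLt le_rfl
    rw [if_pos rfl] at this
    rw [this]
  · intro i j hij
    rw [Fin.sum_univ_eq_sum_range (fun k => V t s i k * V t s j k)]
    have := gram t s i j j.isLt (by omega)
    rw [if_neg (by omega), if_pos hij] at this
    rw [this]
    ring
  · intro i j hij
    rw [Fin.sum_univ_eq_sum_range (fun k => V t s i k * V t s j k)]
    have := gram t s i j j.isLt (by omega)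
    rw [if_neg (by omega), if_neg (by omega)] at this
    rw [this]
    ring
end
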